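/- A dynamical system (X,T) is mild mixing if and only if for every topologically transitive dynamical system (Y,S) the product system (X × Y, T × S) is topologically transitive. -/

import Mathlib

/-- `IP A`: the set of all finite sums of distinct elements of `A ⊆ ℤ`
(sums over finite subsets `F ⊆ A`, with the empty sum equal to `0`). -/
def IP (A : Set ℤ) : Set ℤ :=
  {t | ∃ F : Finset ℤ, ↑F ⊆ A ∧ t = ∑ x ∈ F, x}

/-- `SIP A = IP A - IP A`. -/
def SIP (A : Set ℤ) : Set ℤ :=
  {d | ∃ s ∈ IP A, ∃ t ∈ IP A, d = s - t}

/-- The positive part `S_+ = S ∩ ℕ` of a set of integers. -/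
def posPart (S : Set ℤ) : Set ℤ := S ∩ {n : ℤ | 0 < n}

/-- `B` (a set of positive integers) is an SIP set: there is an infinite set
`A` of positive integers with `SIP(A)_+ ⊆ B`. -/
def IsSIPSet (B : Set ℤ) : Prop :=
  ∃ A : Set ℤ, A ⊆ {n : ℤ | 0 < n} ∧ A.Infinite ∧ posPart (SIP A) ⊆ B

/-- The hitting time set `N(A,B) = {n ∈ ℕ : T^n(A) ∩ B ≠ ∅}` (as a set of
positive integers, viewed inside `ℤ`). -/
def hitting {X : Type*} [TopologicalSpace X] (T : X ≃ₜ X) (A B : Set X) : Set ℤ :=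
  {n : ℤ | 0 < n ∧ ∃ x ∈ A, (⇑T)^[n.toNat] x ∈ B}

/-- `(X,T)` is topologically transitive: `N(U,V) ≠ ∅` for all nonempty open `U,V`. -/
def TopTrans {X : Type*} [TopologicalSpace X] (T : X ≃ₜ X) : Prop :=
  ∀ U V : Set X, IsOpen U → IsOpen V → U.Nonempty → V.Nonempty →
    (hitting T U V).Nonempty

/-- `(X,T)` is mild mixing: for all nonempty open `U,V`, the set `N(U,V)` meets
every SIP subset of `ℕ`. -/
def MildMixing {X : Type*} [TopologicalSpace X] (T : X ≃ₜ X) : Prop :=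
  ∀ U V : Set X, IsOpen U → IsOpen V → U.Nonempty → V.Nonempty →
    ∀ A : Set ℤ, A ⊆ {n : ℤ | 0 < n} → IsSIPSet A → (hitting T U V ∩ A).Nonempty

open Set Function

lemma mem_hitting {X : Type*} [TopologicalSpace X] (T : X ≃ₜ X) (A B : Set X) (n : ℤ) :
    n ∈ hitting T A B ↔ 0 < n ∧ ∃ x ∈ A, (⇑T)^[n.toNat] x ∈ B := Iff.rfl

section Forward

variable {Y : Type*} [TopologicalSpace Y] (S : Y ≃ₜ Y)

lemma step_lemma (hS : TopTrans S) {P : Set Y} (hP : IsOpen P) (hne : P.Nonempty) (n : ℕ) :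
    ∃ a : ℤ, (n : ℤ) < a ∧ (P ∩ (⇑S)^[a.toNat] ⁻¹' P).Nonempty := by
  induction n with
  | zero =>
    obtain ⟨a, ha⟩ := hS P P hP hP hne hne
    obtain ⟨ha0, x, hxP, hx⟩ := ha
    exact ⟨a, by exact_mod_cast ha0, x, hxP, hx⟩
  | succ n ih =>
    obtain ⟨a, han, hane⟩ := ih
    have hQ : IsOpen (P ∩ (⇑S)^[a.toNat] ⁻¹' P) :=
      hP.inter ((S.continuous.iterate _).isOpen_preimage _ hP)
    obtain ⟨c, hc⟩ := hS _ _ hQ hQ hane hane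
    obtain ⟨hc0, y, hyQ, hyc⟩ := hc
    refine ⟨a + c, by push_cast; omega, y, hyQ.1, ?_⟩
    have ht : (a + c).toNat = a.toNat + c.toNat := by omega
    rw [Set.mem_preimage, ht, Function.iterate_add_apply]
    exact hyc.2

/-- Key forward lemma: in a transitive system, every `N(U,V)` contains a shifted SIP set. -/
lemma exists_shifted_SIP (hS : TopTrans S) {U' V' : Set Y} (hU : IsOpen U') (hV : IsOpen V')
    (hUne : U'.Nonempty) (hVne : V'.Nonempty) :
    ∃ (m : ℤ) (A : Set ℤ), 0 < m ∧ A ⊆ {n : ℤ | 0 < n} ∧ A.Infinite ∧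
      ∀ d ∈ posPart (SIP A), m + d ∈ hitting S U' V' := by
  classical
  obtain ⟨m, hm0, x0, hx0U, hx0V⟩ := hS U' V' hU hV hUne hVne
  set W0 : Set Y := U' ∩ (⇑S)^[m.toNat] ⁻¹' V' with hW0
  have hW0open : IsOpen W0 := hU.inter ((S.continuous.iterate _).isOpen_preimage _ hV)
  have hW0ne : W0.Nonempty := ⟨x0, hx0U, hx0V⟩
  -- the type of states
  let St := {p : Set Y × ℤ // IsOpen p.1 ∧ p.1.Nonempty}
  have key : ∀ p : St, ∃ q : St, q.1.1 ⊆ p.1.1 ∧ p.1.2 < q.1.2 ∧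
      ∀ y ∈ q.1.1, (⇑S)^[(q.1.2).toNat] y ∈ p.1.1 := by
    rintro ⟨⟨P, b⟩, hPo, hPne⟩
    obtain ⟨a, hab, hane⟩ := step_lemma S hS hPo hPne b.toNat
    have hQo : IsOpen (P ∩ (⇑S)^[a.toNat] ⁻¹' P) :=
      hPo.inter ((S.continuous.iterate _).isOpen_preimage _ hPo)
    refine ⟨⟨(P ∩ (⇑S)^[a.toNat] ⁻¹' P, a), hQo, hane⟩, inter_subset_left, ?_, ?_⟩
    · show b < a
      omega
    · exact fun y hy => hy.2
  choose F hF1 hF2 hF3 using key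
  let f : ℕ → St := fun k => F^[k] ⟨(W0, 0), hW0open, hW0ne⟩
  have hfsucc : ∀ k, f (k + 1) = F (f k) := fun k => Function.iterate_succ_apply' F k _
  set W : ℕ → Set Y := fun k => (f k).1.1 with hWdef
  set a : ℕ → ℤ := fun k => (f k).1.2 with hadef
  have hW0eq : W 0 = W0 := rfl
  have ha0 : a 0 = 0 := rfl
  have hWsub : ∀ k, W (k + 1) ⊆ W k := fun k => by
    rw [hWdef]; simp only [hfsucc]; exact hF1 (f k)
  have hamono : StrictMono a := strictMono_nat_of_lt_succ (fun k => by
    rw [hadef]; simp only [hfsucc]; exact hF2 (f k))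
  have hapos : ∀ k, 0 < a (k + 1) := fun k => by
    have h := hamono (Nat.succ_pos k)
    rw [ha0] at h
    exact h
  have hlink : ∀ k, ∀ y ∈ W (k + 1), (⇑S)^[(a (k+1)).toNat] y ∈ W k := fun k => by
    rw [hWdef, hadef]; simp only [hfsucc]; exact hF3 (f k)
  -- sums over index sets land in W0
  have sums : ∀ K : ℕ, ∀ y ∈ W K, ∀ J : Finset ℕ, (∀ j ∈ J, 1 ≤ j ∧ j ≤ K) →
      (⇑S)^[(∑ j ∈ J, a j).toNat] y ∈ W 0 := by
    intro K
    induction K with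
    | zero =>
      intro y hy J hJ
      have : J = ∅ := by
        rw [Finset.eq_empty_iff_forall_notMem]; intro j hj; have := hJ j hj; omega
      simp [this, hy]
    | succ K ih =>
      intro y hy J hJ
      by_cases hmem : K + 1 ∈ J
      · have hsum : (∑ j ∈ J, a j) = a (K+1) + ∑ j ∈ J.erase (K+1), a j := by
          rw [Finset.add_sum_erase _ _ hmem]
        have hposSum : 0 ≤ ∑ j ∈ J.erase (K+1), a j := by
          apply Finset.sum_nonneg
          intro j hj
          have hj' := hJ j (Finset.mem_of_mem_erase hj)
          have hje : j = (j - 1) + 1 := by omega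
          rw [hje]
          exact le_of_lt (hapos _)
        have htn : (∑ j ∈ J, a j).toNat = (∑ j ∈ J.erase (K+1), a j).toNat + (a (K+1)).toNat := by
          have := hapos K; omega
        rw [htn, Function.iterate_add_apply]
        have h1 : (⇑S)^[(a (K+1)).toNat] y ∈ W K := hlink K y hy
        exact ih _ h1 _ (fun j hj => by
          have h := hJ j (Finset.mem_of_mem_erase hj)
          have := Finset.ne_of_mem_erase hj
          omega)
      · exact ih y (hWsub K hy) J (fun j hj => by
          have h := hJ j hj
          have : j ≠ K + 1 := fun hc => hmem (hc ▸ hj)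
          omega)
  -- the SIP base set
  refine ⟨m, Set.range (fun k => a (k + 1)), hm0, ?_, ?_, ?_⟩
  · rintro x ⟨k, rfl⟩; exact hapos k
  · exact Set.infinite_range_of_injective (fun i j hij => by
      have := hamono.injective hij; omega)
  · rintro d ⟨⟨s, hs, t, ht, rfl⟩, hdpos⟩
    -- s, t are finite sums of elements of range
    obtain ⟨Fs, hFs, rfl⟩ := hs
    obtain ⟨Ft, hFt, rfl⟩ := ht
    have hdpos' : (0:ℤ) < ∑ x ∈ Fs, x - ∑ x ∈ Ft, x := hdpos
    -- convert to index sets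
    have hinj : Function.Injective (fun k => a (k + 1)) := fun i j hij => by
      have := hamono.injective hij; omega
    -- indices
    have conv : ∀ (G : Finset ℤ), ↑G ⊆ Set.range (fun k => a (k + 1)) →
        ∃ J : Finset ℕ, (∀ j ∈ J, 1 ≤ j) ∧ (∑ x ∈ G, x) = ∑ j ∈ J, a j := by
      intro G hG
      refine ⟨(G.preimage (fun k => a (k + 1)) (hinj.injOn)).image (· + 1), ?_, ?_⟩
      · intro j hj
        simp only [Finset.mem_image] at hj
        obtain ⟨i, _, rfl⟩ := hj; omega
      · rw [Finset.sum_image (fun x _ y _ h => by omega)]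
        rw [Finset.sum_preimage (fun k => a (k + 1)) G (hinj.injOn) (fun x => x)]
        intro x hxG hx
        exact absurd (hG hxG) hx
    obtain ⟨Js, hJs1, hJseq⟩ := conv Fs hFs
    obtain ⟨Jt, hJt1, hJteq⟩ := conv Ft hFt
    set s := ∑ j ∈ Js, a j
    set t := ∑ j ∈ Jt, a j
    have htnonneg : 0 ≤ t := Finset.sum_nonneg (fun j hj => by
      have h1 := hJt1 j hj
      have hje : j = (j - 1) + 1 := by omega
      rw [hje]
      exact le_of_lt (hapos _))
    -- pick K
    obtain ⟨K, hK⟩ : ∃ K : ℕ, (∀ j ∈ Js, j ≤ K) ∧ (∀ j ∈ Jt, j ≤ K) := by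
      refine ⟨(Js ∪ Jt).sup id, fun j hj => ?_, fun j hj => ?_⟩
      · exact Finset.le_sup (f := id) (Finset.mem_union_left _ hj)
      · exact Finset.le_sup (f := id) (Finset.mem_union_right _ hj)
    obtain ⟨y, hy⟩ : (W K).Nonempty := (f K).2.2
    have hzW : (⇑S)^[t.toNat] y ∈ W 0 := sums K y hy Jt (fun j hj => ⟨hJt1 j hj, hK.2 j hj⟩)
    have hsW : (⇑S)^[s.toNat] y ∈ W 0 := sums K y hy Js (fun j hj => ⟨hJs1 j hj, hK.1 j hj⟩)
    rw [hJseq, hJteq] at hdpos' ⊢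
    refine ⟨by omega, (⇑S)^[t.toNat] y, hzW.1, ?_⟩
    have harith : (m + (s - t)).toNat = m.toNat + (s - t).toNat := by omega
    rw [harith, Function.iterate_add_apply]
    have : (⇑S)^[(s-t).toNat] ((⇑S)^[t.toNat] y) = (⇑S)^[s.toNat] y := by
      rw [← Function.iterate_add_apply]
      congr 1
      omega
    rw [this]
    exact hsW.2

end Forward

lemma prodmap_iterate {X Y : Type*} (f : X → X) (g : Y → Y) (n : ℕ) (p : X × Y) :
    (Prod.map f g)^[n] p = (f^[n] p.1, g^[n] p.2) := by
  induction n generalizing p with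
  | zero => simp
  | succ n ih => simp [Function.iterate_succ_apply, ih]

lemma forward_dir {X : Type} [MetricSpace X] [CompactSpace X] (T : X ≃ₜ X) (h : MildMixing T)
    (Y : Type) (mY : MetricSpace Y) (cY : CompactSpace Y) (S : Y ≃ₜ Y) (hS : TopTrans S) :
    TopTrans (T.prodCongr S) := by
  intro O1 O2 hO1 hO2 hO1ne hO2ne
  obtain ⟨⟨x0, y0⟩, hp0⟩ := hO1ne
  obtain ⟨⟨x1, y1⟩, hp1⟩ := hO2ne
  obtain ⟨U, U', hUo, hU'o, hx0, hy0, hsub1⟩ := isOpen_prod_iff.1 hO1 x0 y0 hp0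
  obtain ⟨V, V', hVo, hV'o, hx1, hy1, hsub2⟩ := isOpen_prod_iff.1 hO2 x1 y1 hp1
  obtain ⟨m, A, hm, hApos, hAinf, hkey⟩ := exists_shifted_SIP S hS hU'o hV'o ⟨y0, hy0⟩ ⟨y1, hy1⟩
  set V₂ := (⇑T)^[m.toNat] ⁻¹' V with hV₂
  have hV₂o : IsOpen V₂ := (T.continuous.iterate _).isOpen_preimage _ hVo
  have hV₂ne : V₂.Nonempty := by
    refine ⟨(⇑T.symm)^[m.toNat] x1, ?_⟩
    have hli : Function.LeftInverse (⇑T) (⇑T.symm) := fun x => T.apply_symm_apply x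
    have := (hli.iterate m.toNat) x1
    show (⇑T)^[m.toNat] ((⇑T.symm)^[m.toNat] x1) ∈ V
    rw [this]; exact hx1
  have hBpos : posPart (SIP A) ⊆ {n : ℤ | 0 < n} := fun n hn => hn.2
  obtain ⟨k, hkhit, hkB⟩ :=
    h U V₂ hUo hV₂o ⟨x0, hx0⟩ hV₂ne (posPart (SIP A)) hBpos ⟨A, hApos, hAinf, subset_rfl⟩
  obtain ⟨hk0, x, hxU, hxV₂⟩ := hkhit
  obtain ⟨hmk0, y, hyU', hyV'⟩ := hkey k hkB
  refine ⟨m + k, by omega, (x, y), hsub1 ⟨hxU, hyU'⟩, ?_⟩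
  have hco : ⇑(T.prodCongr S) = Prod.map ⇑T ⇑S := Homeomorph.coe_prodCongr T S
  rw [hco, prodmap_iterate]
  apply hsub2
  refine ⟨?_, hyV'⟩
  show (⇑T)^[(m + k).toNat] x ∈ V
  have harith : (m + k).toNat = m.toNat + k.toNat := by omega
  rw [harith, Function.iterate_add_apply]
  exact hxV₂

section Comb

/-- finite sums over an indexed family -/
def Esum (b : ℕ → ℤ) : Set ℤ := {t | ∃ J : Finset ℕ, t = ∑ j ∈ J, b j}

lemma exists_gt_of_infinite {A0 : Set ℤ} (hA : A0.Infinite) (hpos : A0 ⊆ {n : ℤ | 0 < n})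
    (c : ℤ) : ∃ x ∈ A0, c < x := by
  by_contra hc
  push_neg at hc
  apply hA
  apply Set.Finite.subset (Set.finite_Icc 1 c)
  intro x hx
  exact ⟨hpos hx, hc x hx⟩

lemma exists_sparse_seq {A0 : Set ℤ} (hA : A0.Infinite) (hpos : A0 ⊆ {n : ℤ | 0 < n}) :
    ∃ b : ℕ → ℤ, (∀ k, b k ∈ A0) ∧ (∀ k, 2 * (∑ i ∈ Finset.range k, b i) < b k) := by
  have key : ∀ s : ℤ, ∃ x, x ∈ A0 ∧ 2 * s < x := fun s => by
    obtain ⟨x, hx, hgt⟩ := exists_gt_of_infinite hA hpos (2 * s)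
    exact ⟨x, hx, hgt⟩
  choose pick h1 h2 using key
  classical
  let G : ℤ → ℤ := fun s => s + pick s
  let cum : ℕ → ℤ := fun k => G^[k] 0
  have hcum : ∀ k, cum k = ∑ i ∈ Finset.range k, pick (cum i) := by
    intro k
    induction k with
    | zero => simp [cum]
    | succ k ih =>
      rw [Finset.sum_range_succ, ← ih]
      show G^[k+1] 0 = _
      rw [Function.iterate_succ_apply']
  refine ⟨fun k => pick (cum k), fun k => h1 _, fun k => ?_⟩
  rw [← hcum k]
  exact h2 (cum k)

variable {b : ℕ → ℤ} (hsp : ∀ k, 2 * (∑ i ∈ Finset.range k, b i) < b k)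
include hsp

lemma sparse_bpos : ∀ k, 0 < b k := by
  intro k
  induction k using Nat.strong_induction_on with
  | _ k ih =>
    have hP : 0 ≤ ∑ i ∈ Finset.range k, b i :=
      Finset.sum_nonneg (fun i hi => le_of_lt (ih i (Finset.mem_range.1 hi)))
    have := hsp k
    omega

lemma sparse_Pnn : ∀ k, 0 ≤ ∑ i ∈ Finset.range k, b i := fun k =>
  Finset.sum_nonneg (fun i _ => le_of_lt (sparse_bpos hsp i))

lemma sparse_Pge : ∀ k : ℕ, (k : ℤ) ≤ ∑ i ∈ Finset.range k, b i := by
  intro k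
  calc (k : ℤ) = ∑ _i ∈ Finset.range k, 1 := by simp
  _ ≤ ∑ i ∈ Finset.range k, b i := Finset.sum_le_sum (fun i _ => sparse_bpos hsp i)

lemma sparse_mono : StrictMono b := by
  apply strictMono_nat_of_lt_succ
  intro k
  have h1 := hsp (k + 1)
  rw [Finset.sum_range_succ] at h1
  have h2 := sparse_Pnn hsp k
  have h3 := sparse_bpos hsp k
  omega

lemma Esum_nonneg {e : ℤ} (he : e ∈ Esum b) : 0 ≤ e := by
  obtain ⟨J, rfl⟩ := he
  exact Finset.sum_nonneg (fun j _ => le_of_lt (sparse_bpos hsp j))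

lemma Esum_small_subset {k : ℕ} {J : Finset ℕ} (hlt : ∑ j ∈ J, b j < b k) :
    J ⊆ Finset.range k := by
  intro j' hj'
  rw [Finset.mem_range]
  by_contra hge
  push_neg at hge
  have h1 : b j' ≤ ∑ j ∈ J, b j :=
    Finset.single_le_sum (fun j _ => le_of_lt (sparse_bpos hsp j)) hj'
  have h2 : b k ≤ b j' := (sparse_mono hsp).monotone hge
  omega

lemma Esum_bound {k : ℕ} {J : Finset ℕ} (hJ : J ⊆ Finset.range k) :
    ∑ j ∈ J, b j ≤ ∑ i ∈ Finset.range k, b i :=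
  Finset.sum_le_sum_of_subset_of_nonneg hJ (fun i _ _ => le_of_lt (sparse_bpos hsp i))

/-- The window lemma: shifting by `b k` preserves membership in `Esum b`
within a window of radius `R`, provided `k` is large enough. -/
lemma window {R : ℤ} (hR : 0 ≤ R) {k : ℕ} (hk : (∑ i ∈ Finset.range k, b i) + R < b k)
    {j : ℤ} (hj : |j| ≤ R) : j ∈ Esum b ↔ j + b k ∈ Esum b := by
  have hPnn := sparse_Pnn hsp k
  have habs : -R ≤ j ∧ j ≤ R := abs_le.1 hj
  constructor
  · rintro ⟨J, rfl⟩
    have hJr : J ⊆ Finset.range k := Esum_small_subset hsp (by omega)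
    have hkJ : k ∉ J := fun hc => by have := Finset.mem_range.1 (hJr hc); omega
    refine ⟨insert k J, ?_⟩
    rw [Finset.sum_insert hkJ]
    ring
  · rintro ⟨J, hJ⟩
    -- every element of J is ≤ k
    have hle : ∀ i ∈ J, i ≤ k := by
      intro i hi
      by_contra hgt
      push_neg at hgt
      have h1 : b i ≤ ∑ j' ∈ J, b j' :=
        Finset.single_le_sum (fun j' _ => le_of_lt (sparse_bpos hsp j')) hi
      have h2 : b (k + 1) ≤ b i := (sparse_mono hsp).monotone hgt
      have h3 := hsp (k + 1)
      rw [Finset.sum_range_succ] at h3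
      omega
    have hkJ : k ∈ J := by
      by_contra hk'
      have hJr : J ⊆ Finset.range k := fun i hi => Finset.mem_range.2 (by
        have := hle i hi
        rcases Nat.lt_or_ge i k with h | h
        · exact h
        · exact absurd (Nat.le_antisymm (hle i hi) h) (fun hc => hk' (hc ▸ hi)))
      have := Esum_bound hsp hJr
      omega
    refine ⟨J.erase k, ?_⟩
    have := Finset.add_sum_erase J b hkJ
    omega

lemma Esum_mem_IP {A0 : Set ℤ} (hbA : ∀ k, b k ∈ A0) {e : ℤ} (he : e ∈ Esum b) :
    e ∈ IP A0 := by
  obtain ⟨J, rfl⟩ := he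
  refine ⟨J.image b, ?_, ?_⟩
  · intro x hx
    obtain ⟨j, _, rfl⟩ := Finset.mem_image.1 (Finset.mem_coe.1 hx)
    exact hbA j
  · rw [Finset.sum_image (fun i _ j _ h => (sparse_mono hsp).injective h)]

omit hsp in
lemma zero_mem_Esum : (0 : ℤ) ∈ Esum b := ⟨∅, by simp⟩

/-- arbitrarily large good k -/
lemma exists_good_k (c : ℤ) :
    ∃ k : ℕ, (∑ i ∈ Finset.range k, b i) + c < b k ∧ c < b k := by
  refine ⟨(max c 0).toNat + 1, ?_, ?_⟩ <;>
  · have h1 := sparse_Pge hsp ((max c 0).toNat + 1)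
    have h2 := hsp ((max c 0).toNat + 1)
    have h3 := sparse_Pnn hsp ((max c 0).toNat + 1)
    have : c ≤ ((max c 0).toNat + 1 : ℕ) := by
      push_cast; omega
    omega

end Comb

noncomputable section

abbrev B2 : Type := ({0, 1} : Set ℝ)

def bOne : B2 := ⟨1, by simp⟩
def bZero : B2 := ⟨0, by simp⟩

lemma bOne_ne_bZero : bOne ≠ bZero := by
  intro h
  have : (1 : ℝ) = 0 := congrArg Subtype.val h
  norm_num at this

instance : Finite B2 := ((Set.finite_singleton (1:ℝ)).insert 0).to_subtype

abbrev Omega : Type := ℤ → B2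

instance : MetricSpace Omega := @PiCountable.metricSpace ℤ _ (fun _ => B2) _

example : CompactSpace Omega := by
  show CompactSpace (ℤ → B2)
  exact Pi.compactSpace

example : Continuous (fun y : Omega => (y 0 : B2)) := continuous_apply (A := fun _ : ℤ => B2) 0

example : IsOpen {y : Omega | y 0 = bOne} := by
  have h1 : IsOpen ({bOne} : Set B2) := isOpen_discrete _
  show IsOpen {y : ℤ → B2 | y 0 = bOne}
  exact (continuous_apply (A := fun _ : ℤ => B2) (0 : ℤ)).isOpen_preimage _ h1

def shiftMap : Omega ≃ₜ Omega where
  toFun y := fun j => y (j + 1)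
  invFun y := fun j => y (j - 1)
  left_inv y := by funext j; simp
  right_inv y := by funext j; simp
  continuous_toFun := by
    show Continuous fun (y : ℤ → B2) (j : ℤ) => y (j + 1)
    exact continuous_pi fun j => continuous_apply (A := fun _ : ℤ => B2) (j + 1)
  continuous_invFun := by
    show Continuous fun (y : ℤ → B2) (j : ℤ) => y (j - 1)
    exact continuous_pi fun j => continuous_apply (A := fun _ : ℤ => B2) (j - 1)

example (x y : Omega) : dist x y = ∑' i : ℤ, min ((1 / 2) ^ Encodable.encode i : ℝ) (dist (x i) (y i)) := by
  show (∑' i : ℤ, min ((2:ℝ)⁻¹ ^ Encodable.encode i) (dist (x i) (y i))) = _; simp only [one_div]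

open Encodable in
lemma exists_R {ε : ℝ} (hε : 0 < ε) : ∃ R : ℕ, ∀ x y : Omega,
    (∀ j : ℤ, |j| ≤ (R : ℤ) → x j = y j) → dist x y < ε := by
  obtain ⟨K, hK⟩ : ∃ K : Finset ℤ, (∑' i : {j : ℤ // j ∉ K}, (1/2 : ℝ) ^ encode (i : ℤ)) < ε :=
    ((tendsto_order.1 (tendsto_tsum_compl_atTop_zero
      fun i : ℤ => ((1/2 : ℝ)) ^ encode i)).2 _ hε).exists
  refine ⟨K.sup (fun i => i.natAbs), fun x y hxy => ?_⟩
  have hd : dist x y = ∑' i : ℤ, min ((1/2 : ℝ) ^ encode i) (dist (x i) (y i)) := by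
    show (∑' i : ℤ, min ((2:ℝ)⁻¹ ^ encode i) (dist (x i) (y i))) = _; simp only [one_div]
  rw [hd, ← Summable.sum_add_tsum_compl (s := K) (by simpa only [one_div] using PiCountable.dist_summable x y)]
  have h1 : ∑ i ∈ K, min ((1/2:ℝ) ^ encode i) (dist (x i) (y i)) = 0 := by
    apply Finset.sum_eq_zero
    intro i hi
    have hxi : x i = y i := by
      apply hxy i
      have h2 : i.natAbs ≤ K.sup (fun i => i.natAbs) := Finset.le_sup hi
      rw [Int.abs_eq_natAbs]
      exact_mod_cast h2
    rw [hxi, dist_self]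
    exact min_eq_right (by positivity)
  rw [h1, zero_add]
  calc (∑' i : ↑(↑K : Set ℤ)ᶜ, min ((1/2:ℝ) ^ encode (i:ℤ)) (dist (x i) (y i)))
      ≤ ∑' i : ↑(↑K : Set ℤ)ᶜ, (1/2:ℝ) ^ encode (i:ℤ) :=
        Summable.tsum_le_tsum (fun i => min_le_left _ _)
          ((by simpa only [one_div] using PiCountable.dist_summable x y : Summable fun i : ℤ => min ((1/2:ℝ) ^ encode i) (dist (x i) (y i))).subtype _)
          (summable_geometric_two_encode.subtype _)
  _ < ε := hK

variable (D : Set ℤ)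

noncomputable def omegaPt : Omega := fun j => @ite _ (j ∈ D) (Classical.propDecidable _) bOne bZero

lemma omegaPt_eq_one_iff (j : ℤ) : omegaPt D j = bOne ↔ j ∈ D := by
  unfold omegaPt
  split_ifs with h
  · simp [h]
  · simp only [h, iff_false]
    exact fun hc => bOne_ne_bZero hc.symm

lemma omegaPt_congr {x y : ℤ} (h : x ∈ D ↔ y ∈ D) : omegaPt D x = omegaPt D y := by
  unfold omegaPt
  split_ifs with h1 h2
  · rfl
  · exact absurd (h.1 h1) h2
  · exact absurd (h.2 ‹_›) h1
  · rfl

noncomputable def orbPt (t : ℤ) : Omega := fun j => omegaPt D (j + t)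

lemma shift_orbPt (t : ℤ) : shiftMap (orbPt D t) = orbPt D (t + 1) := by
  funext j
  show omegaPt D ((j + 1) + t) = omegaPt D (j + (t + 1))
  congr 1
  ring

def YD : Set Omega := closure (Set.range (orbPt D))

lemma shift_mem_YD {y : Omega} (hy : y ∈ YD D) : shiftMap y ∈ YD D := by
  have himg : ⇑shiftMap '' Set.range (orbPt D) = Set.range (orbPt D) := by
    ext z
    constructor
    · rintro ⟨w, ⟨t, rfl⟩, rfl⟩
      exact ⟨t + 1, (shift_orbPt D t).symm⟩
    · rintro ⟨t, rfl⟩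
      refine ⟨orbPt D (t - 1), ⟨t - 1, rfl⟩, ?_⟩
      rw [shift_orbPt D (t - 1), sub_add_cancel]
  have := shiftMap.image_closure (Set.range (orbPt D))
  have h2 : shiftMap y ∈ ⇑shiftMap '' YD D := ⟨y, hy, rfl⟩
  unfold YD at h2 ⊢
  rw [this, himg] at h2
  exact h2

lemma shift_symm_mem_YD {y : Omega} (hy : y ∈ YD D) : shiftMap.symm y ∈ YD D := by
  have himg : ⇑shiftMap.symm '' Set.range (orbPt D) = Set.range (orbPt D) := by
    ext z
    constructor
    · rintro ⟨w, ⟨t, rfl⟩, rfl⟩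
      refine ⟨t - 1, ?_⟩
      have := shift_orbPt D (t - 1)
      rw [sub_add_cancel] at this
      rw [← this, Homeomorph.symm_apply_apply]
    · rintro ⟨t, rfl⟩
      exact ⟨orbPt D (t + 1), ⟨t + 1, rfl⟩, by rw [← shift_orbPt, Homeomorph.symm_apply_apply]⟩
  have := shiftMap.symm.image_closure (Set.range (orbPt D))
  have h2 : shiftMap.symm y ∈ ⇑shiftMap.symm '' YD D := ⟨y, hy, rfl⟩
  unfold YD at h2 ⊢
  rw [this, himg] at h2
  exact h2

lemma shift_iter (n : ℕ) (y : Omega) : (⇑shiftMap)^[n] y = fun j => y (j + n) := by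
  induction n with
  | zero => funext j; simp
  | succ n ih =>
    rw [Function.iterate_succ_apply', ih]
    funext j
    show (fun j' : ℤ => y (j' + n)) (j + 1) = y (j + (n + 1 : ℕ))
    simp only []
    congr 1
    push_cast
    ring

def YT : Type := {y : Omega // y ∈ YD D}

noncomputable instance : MetricSpace (YT D) :=
  inferInstanceAs (MetricSpace {y : Omega // y ∈ YD D})

instance : CompactSpace (YT D) :=
  isCompact_iff_compactSpace.1 ((isClosed_closure).isCompact)

noncomputable def SD : YT D ≃ₜ YT D where
  toFun y := ⟨shiftMap y.1, shift_mem_YD D y.2⟩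
  invFun y := ⟨shiftMap.symm y.1, shift_symm_mem_YD D y.2⟩
  left_inv y := Subtype.ext (shiftMap.symm_apply_apply y.1)
  right_inv y := Subtype.ext (shiftMap.apply_symm_apply y.1)
  continuous_toFun :=
    Continuous.subtype_mk (shiftMap.continuous.comp continuous_subtype_val) _
  continuous_invFun :=
    Continuous.subtype_mk (shiftMap.symm.continuous.comp continuous_subtype_val) _

lemma SD_iter_val (n : ℕ) (y : YT D) : ((⇑(SD D))^[n] y).1 = (⇑shiftMap)^[n] y.1 := by
  induction n with
  | zero => rfl
  | succ n ih =>
    rw [Function.iterate_succ_apply', Function.iterate_succ_apply', ← ih]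
    rfl

noncomputable def orbYT (t : ℤ) : YT D := ⟨orbPt D t, subset_closure (Set.mem_range_self t)⟩

lemma denseOrb {D : Set ℤ} {P : Set (YT D)} (hP : IsOpen P) (hne : P.Nonempty) :
    ∃ (t : ℤ) (ε : ℝ), 0 < ε ∧ ∀ z : YT D, dist z.1 (orbPt D t) < ε → z ∈ P := by
  obtain ⟨p, hp⟩ := hne
  obtain ⟨ε, hε, hball⟩ := Metric.isOpen_iff.1 hP p hp
  obtain ⟨w, hw, hwd⟩ := Metric.mem_closure_iff.1 p.2 (ε/2) (by positivity)
  obtain ⟨t, rfl⟩ := hw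
  refine ⟨t, ε/2, by positivity, fun z hzd => hball ?_⟩
  rw [Metric.mem_ball]; show dist z.1 p.1 < ε
  calc dist z.1 p.1 ≤ dist z.1 (orbPt D t) + dist (orbPt D t) p.1 := dist_triangle _ _ _
  _ < ε/2 + ε/2 := add_lt_add hzd (by rw [dist_comm]; exact hwd)
  _ = ε := by ring

lemma topTrans_SD {D : Set ℤ}
    (hwin : ∀ (v : ℤ) (R : ℕ) (M : ℤ), ∃ t : ℤ, M < t ∧
      ∀ j : ℤ, |j| ≤ (R : ℤ) → omegaPt D (j + t) = omegaPt D (j + v)) :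
    TopTrans (SD D) := by
  intro P Q hPo hQo hPne hQne
  obtain ⟨u, εP, hεP, hPin⟩ := denseOrb hPo hPne
  obtain ⟨v, εQ, hεQ, hQin⟩ := denseOrb hQo hQne
  obtain ⟨R, hR⟩ := exists_R hεQ
  obtain ⟨t, ht, hagree⟩ := hwin v R u
  refine ⟨t - u, by omega, orbYT D u, hPin _ (by show dist (orbPt D u) (orbPt D u) < εP; rw [dist_self]; exact hεP), ?_⟩
  apply hQin
  have hval := SD_iter_val D (t - u).toNat (orbYT D u)
  rw [hval, shift_iter]
  have heq : (fun j : ℤ => orbPt D u (j + ((t - u).toNat : ℤ))) = orbPt D t := by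
    funext j
    show omegaPt D ((j + ((t - u).toNat : ℤ)) + u) = omegaPt D (j + t)
    congr 1
    omega
  show dist (fun j : ℤ => orbPt D u (j + ((t - u).toNat : ℤ))) (orbPt D v) < εQ
  rw [heq]
  apply hR
  intro j hj
  exact hagree j hj

lemma hitting_SD_sub {D : Set ℤ} {n : ℤ}
    (hn : n ∈ hitting (SD D) {y : YT D | y.1 0 = bOne} {y : YT D | y.1 0 = bOne}) :
    0 < n ∧ ∃ t : ℤ, t ∈ D ∧ n + t ∈ D := by
  obtain ⟨hn0, y, hyU, hyV⟩ := hn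
  have hval := SD_iter_val D n.toNat y
  have hyn : y.1 n = bOne := by
    have h1 : ((⇑(SD D))^[n.toNat] y).1 0 = bOne := hyV
    rw [hval, shift_iter] at h1
    have h2 : y.1 ((0 : ℤ) + (n.toNat : ℤ)) = bOne := h1
    have h3 : (0 : ℤ) + (n.toNat : ℤ) = n := by omega
    rwa [h3] at h2
  have hG : IsOpen {z : Omega | z 0 = bOne ∧ z n = bOne} := by
    have h1 : IsOpen ({bOne} : Set B2) := isOpen_discrete _
    have h2 : IsOpen {z : ℤ → B2 | z 0 = bOne} :=
      (continuous_apply (A := fun _ : ℤ => B2) (0 : ℤ)).isOpen_preimage _ h1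
    have h3 : IsOpen {z : ℤ → B2 | z n = bOne} :=
      (continuous_apply (A := fun _ : ℤ => B2) n).isOpen_preimage _ h1
    exact h2.inter h3
  have hyG : y.1 ∈ {z : Omega | z 0 = bOne ∧ z n = bOne} := ⟨hyU, hyn⟩
  obtain ⟨z, hzG, hzR⟩ := (_root_.mem_closure_iff.1 y.2 _ hG hyG)
  obtain ⟨t, rfl⟩ := hzR
  refine ⟨hn0, t, ?_, ?_⟩
  · have := hzG.1
    have h0 : omegaPt D ((0 : ℤ) + t) = bOne := this
    rw [show (0 : ℤ) + t = t by ring] at h0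
    exact (omegaPt_eq_one_iff D t).1 h0
  · exact (omegaPt_eq_one_iff D (n + t)).1 hzG.2

lemma reverse_dir {X : Type} [MetricSpace X] [CompactSpace X] (T : X ≃ₜ X)
    (hp : ∀ (Y : Type) (_ : MetricSpace Y) (_ : CompactSpace Y) (S : Y ≃ₜ Y),
      TopTrans S → TopTrans (T.prodCongr S)) : MildMixing T := by
  intro U V hU hV hUne hVne B hBpos hSIP
  obtain ⟨A0, hA0pos, hA0inf, hA0sub⟩ := hSIP
  obtain ⟨b, hbA, hsp⟩ := exists_sparse_seq hA0inf hA0pos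
  set D : Set ℤ := Esum b with hD
  have hwin : ∀ (v : ℤ) (R : ℕ) (M : ℤ), ∃ t : ℤ, M < t ∧
      ∀ j : ℤ, |j| ≤ (R : ℤ) → omegaPt D (j + t) = omegaPt D (j + v) := by
    intro v R M
    obtain ⟨k, hk1, hk2⟩ := exists_good_k hsp (|v| + R + |M| + |v|)
    have habs1 : (0:ℤ) ≤ |v| := abs_nonneg v
    have habs2 : (0:ℤ) ≤ |M| := abs_nonneg M
    have habs3 : M ≤ |M| := le_abs_self M
    have habs4 : -|v| ≤ v := neg_abs_le v
    refine ⟨v + b k, by omega, fun j hj => ?_⟩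
    have hjv : |j + v| ≤ |v| + (R:ℤ) := by
      calc |j + v| ≤ |j| + |v| := abs_add_le j v
      _ ≤ |v| + R := by omega
    have hiff := window hsp (R := |v| + (R:ℤ)) (by omega) (k := k) (by omega) hjv
    have harg : j + (v + b k) = (j + v) + b k := by ring
    rw [harg]
    exact (omegaPt_congr D hiff).symm
  have htrans : TopTrans (SD D) := topTrans_SD hwin
  have hprod := hp (YT D) inferInstance inferInstance (SD D) htrans
  have hU'o : IsOpen {y : YT D | y.1 0 = bOne} := by
    have h1 : IsOpen ({bOne} : Set B2) := isOpen_discrete _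
    have h2 : Continuous fun y : YT D => y.1 0 :=
      (continuous_apply (A := fun _ : ℤ => B2) (0:ℤ)).comp continuous_subtype_val
    exact h2.isOpen_preimage _ h1
  have hU'ne : ({y : YT D | y.1 0 = bOne} : Set (YT D)).Nonempty := by
    refine ⟨orbYT D 0, ?_⟩
    show omegaPt D ((0:ℤ) + 0) = bOne
    rw [show ((0:ℤ) + 0) = 0 by ring]
    exact (omegaPt_eq_one_iff D 0).2 (by rw [hD]; exact zero_mem_Esum)
  obtain ⟨n, hn⟩ := hprod (U ×ˢ {y : YT D | y.1 0 = bOne}) (V ×ˢ {y : YT D | y.1 0 = bOne})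
      (hU.prod hU'o) (hV.prod hU'o) (hUne.prod hU'ne) (hVne.prod hU'ne)
  obtain ⟨hn0, p, hpU, hit⟩ := hn
  obtain ⟨x, y⟩ := p
  have hco : ⇑(T.prodCongr (SD D)) = Prod.map ⇑T ⇑(SD D) := Homeomorph.coe_prodCongr _ _
  rw [hco, prodmap_iterate] at hit
  refine ⟨n, ⟨hn0, x, hpU.1, hit.1⟩, ?_⟩
  have hhit : n ∈ hitting (SD D) {y : YT D | y.1 0 = bOne} {y : YT D | y.1 0 = bOne} :=
    ⟨hn0, y, hpU.2, hit.2⟩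
  obtain ⟨-, t, htD, hntD⟩ := hitting_SD_sub hhit
  rw [hD] at htD hntD
  apply hA0sub
  exact ⟨⟨n + t, Esum_mem_IP hsp hbA hntD, t, Esum_mem_IP hsp hbA htD, by ring⟩, hn0⟩

end

/-- a dynamical system `(X,T)` is mild mixing iff for every
topologically transitive dynamical system `(Y,S)` the product system
`(X × Y, T × S)` is topologically transitive. -/
theorem mildMixing_iff_prod_transitive {X : Type} [MetricSpace X] [CompactSpace X]
    (T : X ≃ₜ X) :
    MildMixing T ↔
      ∀ (Y : Type) (_ : MetricSpace Y) (_ : CompactSpace Y) (S : Y ≃ₜ Y),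
        TopTrans S → TopTrans (T.prodCongr S) := by
  constructor
  · intro h Y mY cY S hS
    exact forward_dir T h Y mY cY S hS
  · intro hp
    exact reverse_dir T hp
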